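/- If a graph G admits a tree-layout of bandwidth at most k, then G admits a completion (supergraph on the same vertex set) H that is proper chordal with clique number ω(H) ≤ k+1. -/

import Mathlib

open SimpleGraph

/-- `x` is a (reflexive) ancestor of `y` in the tree `T` rooted at `r`,
expressed metrically: `x` lies on the unique `r`–`y` path. -/
def AncIn {V : Type*} (T : SimpleGraph V) (r x y : V) : Prop :=
  T.dist r x + T.dist x y = T.dist r y

/-- A tree-layout of `G`: a rooted tree on the vertex set of `G` such that the endpoints
of every edge of `G` are in ancestor-descendant relation. -/
structure TreeLayout {V : Type*} (G : SimpleGraph V) where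
  tree : SimpleGraph V
  isTree : tree.IsTree
  root : V
  layout : ∀ ⦃x y : V⦄, G.Adj x y → AncIn tree root x y ∨ AncIn tree root y x

namespace TreeLayout

variable {V : Type*} {G : SimpleGraph V}

/-- `x` is an ancestor of `y` (reflexively) in the tree-layout. -/
def Anc (L : TreeLayout G) (x y : V) : Prop := AncIn L.tree L.root x y

def StrictAnc (L : TreeLayout G) (x y : V) : Prop := L.Anc x y ∧ x ≠ y

/-- The bandwidth of the tree-layout is at most `k`: neighbours in `G` are at
tree-distance at most `k`. -/
def BandwidthLE (L : TreeLayout G) (k : ℕ) : Prop :=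
  ∀ ⦃x y : V⦄, G.Adj x y → L.tree.dist x y ≤ k

/-- The interval `[a,b]` of the tree-layout: vertices on the tree path from `a` to `b`
(for `a` an ancestor of `b`). -/
def interval (L : TreeLayout G) (a b : V) : Set V := {z : V | L.Anc a z ∧ L.Anc z b}

end TreeLayout

/-- Treebandwidth: the minimum bandwidth over tree-layouts of `G`. -/
noncomputable def treebandwidth {V : Type*} (G : SimpleGraph V) : ℕ :=
  sInf {k | ∃ L : TreeLayout G, L.BandwidthLE k}

/-- Treedepth: the minimum depth (number of vertices on a root-to-leaf path) of a
tree-layout (elimination tree) of `G`. -/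
noncomputable def treedepth {V : Type*} (G : SimpleGraph V) : ℕ :=
  sInf {k | ∃ L : TreeLayout G, ∀ v : V, L.tree.dist L.root v + 1 ≤ k}

/-- A tree-partition of `G`: a partition of `V(G)` indexed by the nodes of a tree such that
every edge of `G` has both ends in one part or in parts indexed by adjacent nodes. -/
structure TreePartition {V : Type*} (G : SimpleGraph V) where
  ι : Type
  tree : SimpleGraph ι
  isTree : tree.IsTree
  part : V → ι
  adj : ∀ ⦃x y : V⦄, G.Adj x y → part x = part y ∨ tree.Adj (part x) (part y)

/-- Tree-partition-width: minimum over tree-partitions of the maximum part size. -/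
noncomputable def treePartitionWidth {V : Type*} (G : SimpleGraph V) : ℕ :=
  sInf {k | ∃ P : TreePartition G, ∀ i : P.ι, {v : V | P.part v = i}.ncard ≤ k}

/-- The connected component of `v` in the subgraph of `G` induced by `S`. -/
def connCompIn {V : Type*} (G : SimpleGraph V) (S : Set V) (v : V) : Set V :=
  {w : V | ∃ (hv : v ∈ S) (hw : w ∈ S), (G.induce S).Reachable ⟨v, hv⟩ ⟨w, hw⟩}

/-- `RootedTreedepthLE G U S n` expresses `td(G[S], U) ≤ n` for the rooted treedepth:
it is `0` when `S` misses `U`, and otherwise one may delete one vertex from each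
connected component and recurse. -/
inductive RootedTreedepthLE {V : Type*} (G : SimpleGraph V) (U : Set V) : Set V → ℕ → Prop
  | base (S : Set V) (n : ℕ) (h : S ∩ U = ∅) : RootedTreedepthLE G U S n
  | step (S : Set V) (n : ℕ) (pick : ∀ v : V, v ∈ S → V)
      (hpick : ∀ (v : V) (hv : v ∈ S), pick v hv ∈ connCompIn G S v)
      (h : ∀ (v : V) (hv : v ∈ S),
        RootedTreedepthLE G U (connCompIn G S v \ {pick v hv}) n) :
      RootedTreedepthLE G U S (n + 1)

/-- A `U`-rooted minor model of the path on `k` vertices in `G`. -/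
structure RootedPathMinor {V : Type*} (G : SimpleGraph V) (U : Set V) (k : ℕ) where
  branch : Fin k → Set V
  connected : ∀ i, (G.induce (branch i)).Connected
  disjoint : ∀ i j, i ≠ j → Disjoint (branch i) (branch j)
  rooted : ∀ i, (branch i ∩ U).Nonempty
  adj : ∀ i j : Fin k, (j : ℕ) = (i : ℕ) + 1 → ∃ a ∈ branch i, ∃ b ∈ branch j, G.Adj a b

/-- A subdivision of the `k`-fan in `G` with universal (center) vertex `v`:
branch vertices `b 0, …, b (k-1)` of the path, internally disjoint spokes from `v`
and internally disjoint path segments between consecutive branch vertices. -/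
structure FanSubdivision {V : Type*} (G : SimpleGraph V) (v : V) (k : ℕ) where
  b : Fin k → V
  binj : Function.Injective b
  bne : ∀ i, b i ≠ v
  spoke : ∀ i : Fin k, G.Walk v (b i)
  spokePath : ∀ i, (spoke i).IsPath
  seg : ∀ (i : Fin k) (h : (i : ℕ) + 1 < k), G.Walk (b i) (b ⟨(i : ℕ) + 1, h⟩)
  segPath : ∀ i h, (seg i h).IsPath
  vNotinSeg : ∀ i h, v ∉ (seg i h).support
  spokeDisj : ∀ i j, i ≠ j →
    {x | x ∈ (spoke i).support} ∩ {x | x ∈ (spoke j).support} = {v}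
  spokeSegDisj : ∀ i j h,
    {x | x ∈ (spoke i).support} ∩ {x | x ∈ (seg j h).support} ⊆
      ({b i} : Set V) ∩ {b j, b ⟨(j : ℕ) + 1, h⟩}
  segDisj : ∀ i j hi hj, i ≠ j →
    {x | x ∈ (seg i hi).support} ∩ {x | x ∈ (seg j hj).support} ⊆
      ({b i, b ⟨(i : ℕ) + 1, hi⟩} : Set V) ∩ {b j, b ⟨(j : ℕ) + 1, hj⟩}

/-- A `p`-centered colouring: every (nonempty) connected induced subgraph either receives
more than `p` colours or has a uniquely coloured vertex. -/
def IsPCenteredColoring {V : Type*} (G : SimpleGraph V) (p : ℕ) (c : V → ℕ) : Prop :=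
  ∀ S : Set V, S.Nonempty → (G.induce S).Connected →
    p < (c '' S).ncard ∨ ∃ x ∈ S, ∀ y ∈ S, c y = c x → y = x

/-- Treewidth, characterised via tree-layouts: the minimum over tree-layouts of the maximum
over nodes `u` of the number of strict ancestors of `u` that are `G`-neighbours of some
descendant of `u` (including `u`). -/
noncomputable def treewidthTL {V : Type*} (G : SimpleGraph V) : ℕ :=
  sInf {k | ∃ L : TreeLayout G, ∀ u : V,
    {a : V | L.StrictAnc a u ∧ ∃ d : V, L.Anc u d ∧ G.Adj a d}.ncard ≤ k}

/-- The pruned subtree of `x` in a tree-layout: descendants of `x` (including `x`) having a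
neighbour of `x` among their own descendants. -/
def prunedSubtree {V : Type*} {G : SimpleGraph V} (L : TreeLayout G) (x : V) : Set V :=
  {y : V | L.Anc x y ∧ ∃ d : V, L.Anc y d ∧ G.Adj x d}

/-- Treespan: the minimum over tree-layouts of (maximum size of a pruned subtree minus one). -/
noncomputable def treespan {V : Type*} (G : SimpleGraph V) : ℕ :=
  sInf {k | ∃ L : TreeLayout G, ∀ x : V, (prunedSubtree L x).ncard ≤ k + 1}

/-- A tree decomposition of `G`. -/
structure TreeDecomp {V : Type*} (G : SimpleGraph V) where
  ι : Type
  tree : SimpleGraph ι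
  isTree : tree.IsTree
  bag : ι → Set V
  coverV : ∀ v : V, ∃ t, v ∈ bag t
  coverE : ∀ ⦃x y : V⦄, G.Adj x y → ∃ t, x ∈ bag t ∧ y ∈ bag t
  subtree : ∀ v : V, (tree.induce {t : ι | v ∈ bag t}).Connected

/-- Domino treewidth: minimum width over tree decompositions in which every vertex
belongs to at most two bags. -/
noncomputable def dominoTreewidth {V : Type*} (G : SimpleGraph V) : ℕ :=
  sInf {k | ∃ D : TreeDecomp G, (∀ v : V, {t : D.ι | v ∈ D.bag t}.ncard ≤ 2) ∧
    ∀ t : D.ι, (D.bag t).ncard ≤ k + 1}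

/-- Edge-treewidth via tree-layouts: the minimum over tree-layouts of the maximum over nodes
`u` of the number of edges with one endpoint a descendant of `u` (including `u`) and the other
a strict ancestor of `u`. -/
noncomputable def edgeTreewidth {V : Type*} (G : SimpleGraph V) : ℕ :=
  sInf {k | ∃ L : TreeLayout G, ∀ u : V,
    {p : V × V | L.StrictAnc p.1 u ∧ L.Anc u p.2 ∧ G.Adj p.1 p.2}.ncard ≤ k}

/-- `S` is a block (2-connected component) of `G`: a maximal connected set of vertices whose
induced subgraph has no cutvertex. -/
def IsBlock {V : Type*} (G : SimpleGraph V) (S : Set V) : Prop :=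
  S.Nonempty ∧ (G.induce S).Connected ∧
    (∀ x ∈ S, (G.induce (S \ {x})).Preconnected) ∧
    ∀ S' : Set V, S ⊆ S' → (G.induce S').Connected →
      (∀ x ∈ S', (G.induce (S' \ {x})).Preconnected) → S' = S

/-- Biconnected maximum degree: the maximum over blocks of `G` of the maximum degree
inside the block. -/
noncomputable def biconnMaxDegree {V : Type*} (G : SimpleGraph V) : ℕ :=
  sSup {d | ∃ (S : Set V) (v : V), IsBlock G S ∧ v ∈ S ∧ d = {w ∈ S | G.Adj v w}.ncard}

/-- `G` is 3-connected: more than 3 vertices, and removing any two vertices leaves it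
connected. -/
def ThreeConnected {V : Type*} (G : SimpleGraph V) : Prop :=
  3 < Nat.card V ∧ ∀ x y : V, (G.induce {v : V | v ≠ x ∧ v ≠ y}).Connected

/-- `G` has `H` as a minor (branch-set model). -/
def HasMinor {V W : Type*} (G : SimpleGraph V) (H : SimpleGraph W) : Prop :=
  ∃ B : W → Set V, (∀ w, (G.induce (B w)).Connected) ∧
    (∀ w w', w ≠ w' → Disjoint (B w) (B w')) ∧
    ∀ ⦃w w'⦄, H.Adj w w' → ∃ a ∈ B w, ∃ b ∈ B w', G.Adj a b

/-- Planarity via Wagner's theorem: no `K₅` minor and no `K₃,₃` minor. -/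
def PlanarWagner {V : Type*} (G : SimpleGraph V) : Prop :=
  ¬ HasMinor G (completeGraph (Fin 5)) ∧
    ¬ HasMinor G (completeBipartiteGraph (Fin 3) (Fin 3))

/-- A subdivision of the `k`-wheel in `G` with hub `v`. -/
structure WheelSubdivision {V : Type*} (G : SimpleGraph V) (v : V) (k : ℕ) where
  b : Fin k → V
  binj : Function.Injective b
  bne : ∀ i, b i ≠ v
  spoke : ∀ i : Fin k, G.Walk v (b i)
  spokePath : ∀ i, (spoke i).IsPath
  seg : ∀ i : Fin k, G.Walk (b i) (b (finRotate k i))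
  segPath : ∀ i, (seg i).IsPath
  vNotinSeg : ∀ i, v ∉ (seg i).support
  spokeDisj : ∀ i j, i ≠ j →
    {x | x ∈ (spoke i).support} ∩ {x | x ∈ (spoke j).support} = {v}
  spokeSegDisj : ∀ i j,
    {x | x ∈ (spoke i).support} ∩ {x | x ∈ (seg j).support} ⊆
      ({b i} : Set V) ∩ {b j, b (finRotate k j)}
  segDisj : ∀ i j, i ≠ j →
    {x | x ∈ (seg i).support} ∩ {x | x ∈ (seg j).support} ⊆
      ({b i, b (finRotate k i)} : Set V) ∩ {b j, b (finRotate k j)}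

/-- A subdivision of the `k`-dipole with poles `u`, `v`: `k` internally vertex-disjoint
`u`–`v` paths of length at least `2`. -/
structure DipoleSubdivision {V : Type*} (G : SimpleGraph V) (u v : V) (k : ℕ) where
  path : Fin k → G.Walk u v
  isPath : ∀ i, (path i).IsPath
  len : ∀ i, 2 ≤ (path i).length
  disj : ∀ i j, i ≠ j →
    {x | x ∈ (path i).support} ∩ {x | x ∈ (path j).support} = ({u, v} : Set V)

/-- A separation of `G`. -/
def IsSeparation {V : Type*} (G : SimpleGraph V) (A B : Set V) : Prop :=
  A ∪ B = Set.univ ∧ ∀ a ∈ A \ B, ∀ b ∈ B \ A, ¬ G.Adj a b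

/-- `μ(X,Y)`: the minimum order of a separation `(A,B)` with `X ⊆ A` and `Y ⊆ B`. -/
noncomputable def muSep {V : Type*} (G : SimpleGraph V) (X Y : Set V) : ℕ :=
  sInf {n | ∃ A B : Set V, IsSeparation G A B ∧ X ⊆ A ∧ Y ⊆ B ∧ (A ∩ B).ncard = n}

def IsMaximalClique {V : Type*} (G : SimpleGraph V) (K : Set V) : Prop :=
  G.IsClique K ∧ ∀ K' : Set V, G.IsClique K' → K ⊆ K' → K' = K

/-- `G` is proper chordal: it has a tree-layout in which every maximal clique is an
interval of a root-to-leaf path. -/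
def ProperChordal {V : Type*} (G : SimpleGraph V) : Prop :=
  ∃ L : TreeLayout G, ∀ K : Set V, IsMaximalClique G K →
    ∃ a b : V, L.Anc a b ∧ K = L.interval a b

/-- A topological-minor model (subdivision embedding) of `H` in `G`. -/
structure TopMinorEmbedding {W V : Type*} (H : SimpleGraph W) (G : SimpleGraph V) where
  φ : W → V
  inj : Function.Injective φ
  path : ∀ ⦃a b : W⦄, H.Adj a b → G.Walk (φ a) (φ b)
  isPath : ∀ ⦃a b : W⦄ (h : H.Adj a b), (path h).IsPath
  branchOnPath : ∀ ⦃a b : W⦄ (h : H.Adj a b) (w : W),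
    φ w ∈ (path h).support → w = a ∨ w = b
  disj : ∀ ⦃a b c d : W⦄ (hab : H.Adj a b) (hcd : H.Adj c d), s(a, b) ≠ s(c, d) →
    {x | x ∈ (path hab).support} ∩ {x | x ∈ (path hcd).support} ⊆
      ({φ a, φ b} : Set V) ∩ {φ c, φ d}

/-- A subdivision of the star `K_{1,s}` in `H` with all leaves in `X`. -/
structure StarSubdivision {V : Type*} (H : SimpleGraph V) (X : Set V) (s : ℕ) where
  center : V
  leaf : Fin s → V
  leafInj : Function.Injective leaf
  leafX : ∀ i, leaf i ∈ X
  leafNe : ∀ i, leaf i ≠ center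
  path : ∀ i : Fin s, H.Walk center (leaf i)
  isPath : ∀ i, (path i).IsPath
  disj : ∀ i j, i ≠ j →
    {x | x ∈ (path i).support} ∩ {x | x ∈ (path j).support} = {center}

/-- The weight `w(t,U)` of a set `U` at a node `t` of a tree decomposition is at most `a`:
`|β(t) ∩ U|` plus the number of a suitable family of adhesions incident to `t` whose union
hits all paths from `β(t)` to `U ∖ β(t)` is at most `a`. -/
def WeightLE {V : Type*} {G : SimpleGraph V} (D : TreeDecomp G) (U : Set V) (t : D.ι)
    (a : ℕ) : Prop :=
  ∃ F : Set D.ι, (∀ s ∈ F, D.tree.Adj t s) ∧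
    (D.bag t ∩ U).ncard + F.ncard ≤ a ∧
    ∀ ⦃x y : V⦄ (p : G.Walk x y), x ∈ D.bag t → y ∈ U \ D.bag t →
      ∃ z ∈ p.support, ∃ s ∈ F, z ∈ D.bag t ∩ D.bag s

/-- The graph obtained from `G` by subdividing the edge `xy` into a path with `n + 1`
new internal vertices. -/
def subdivideEdge {V : Type*} (G : SimpleGraph V) (x y : V) (n : ℕ) :
    SimpleGraph (V ⊕ Fin (n + 1)) :=
  SimpleGraph.fromRel (fun a b =>
    (∃ u w : V, a = Sum.inl u ∧ b = Sum.inl w ∧ G.Adj u w ∧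
      ¬(u = x ∧ w = y) ∧ ¬(u = y ∧ w = x)) ∨
    (a = Sum.inl x ∧ b = Sum.inr 0) ∨
    (∃ i : Fin n, a = Sum.inr i.castSucc ∧ b = Sum.inr i.succ) ∨
    (a = Sum.inr (Fin.last n) ∧ b = Sum.inl y))

section AuxTreeLayout

variable {V : Type*} {T : SimpleGraph V} {r : V}

lemma ancIn_refl (T : SimpleGraph V) (r x : V) : AncIn T r x x := by
  simp [AncIn, SimpleGraph.dist_self]

lemma ancIn_antisymm (hc : T.Connected) {x y : V} (h1 : AncIn T r x y)
    (h2 : AncIn T r y x) : x = y := by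
  unfold AncIn at h1 h2
  have h3 : T.dist x y = 0 := by omega
  exact hc.dist_eq_zero_iff.mp h3

lemma ancIn_trans (hc : T.Connected) {x y z : V} (h1 : AncIn T r x y)
    (h2 : AncIn T r y z) : AncIn T r x z := by
  unfold AncIn at *
  have t1 := hc.dist_triangle (u := x) (v := y) (w := z)
  have t2 := hc.dist_triangle (u := r) (v := x) (w := z)
  omega

lemma ancIn_geodesic (hc : T.Connected) {a z b : V} (h1 : AncIn T r a z)
    (h2 : AncIn T r z b) : T.dist a z + T.dist z b = T.dist a b := by
  have h3 := ancIn_trans hc h1 h2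
  unfold AncIn at *
  have t1 := hc.dist_triangle (u := a) (v := z) (w := b)
  omega

lemma mem_geodesic_support (hT : T.IsTree) {a b z : V} (p : T.Walk a b) (hp : p.IsPath)
    (hlen : p.length = T.dist a b) (hz : T.dist a z + T.dist z b = T.dist a b) :
    z ∈ p.support := by
  obtain ⟨p1, hp1, hl1⟩ := hT.isConnected.exists_path_of_dist a z
  obtain ⟨p2, hp2, hl2⟩ := hT.isConnected.exists_path_of_dist z b
  have hlen' : (p1.append p2).length = T.dist a b := by
    rw [SimpleGraph.Walk.length_append]; omega
  have hpath : (p1.append p2).IsPath :=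
    SimpleGraph.Walk.isPath_of_length_eq_dist _ hlen'
  have huniq := (hT.existsUnique_path a b).unique hpath hp
  rw [← huniq, SimpleGraph.Walk.mem_support_append_iff]
  exact Or.inl (SimpleGraph.Walk.end_mem_support p1)

lemma tree_comparable (hT : T.IsTree) {a b z w : V}
    (hz : T.dist a z + T.dist z b = T.dist a b)
    (hw : T.dist a w + T.dist w b = T.dist a b)
    (hle : T.dist a z ≤ T.dist a w) :
    T.dist a z + T.dist z w = T.dist a w := by
  classical
  obtain ⟨p, hp, hlen⟩ := hT.isConnected.exists_path_of_dist a b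
  have hzs : z ∈ p.support := mem_geodesic_support hT p hp hlen hz
  have hws : w ∈ p.support := mem_geodesic_support hT p hp hlen hw
  have hsplit := SimpleGraph.Walk.take_spec p hzs
  have hlq : (p.takeUntil z hzs).length + (p.dropUntil z hzs).length = T.dist a b := by
    rw [← SimpleGraph.Walk.length_append, hsplit, hlen]
  have hdaz := T.dist_le (p.takeUntil z hzs)
  have hdzb := T.dist_le (p.dropUntil z hzs)
  rw [← hsplit, SimpleGraph.Walk.mem_support_append_iff] at hws
  have htri := hT.isConnected.dist_triangle (u := a) (v := z) (w := w)
  rcases hws with hw1 | hw2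
  · -- w on the a-z part
    set q := p.takeUntil z hzs with hq
    have hsplit2 := SimpleGraph.Walk.take_spec q hw1
    have hlq2 : (q.takeUntil w hw1).length + (q.dropUntil w hw1).length = q.length := by
      rw [← SimpleGraph.Walk.length_append, hsplit2]
    have h1 := T.dist_le (q.takeUntil w hw1)
    have h2 := T.dist_le (q.dropUntil w hw1)
    have hcomm : T.dist z w = T.dist w z := SimpleGraph.dist_comm
    omega
  · -- w on the z-b part
    set q := p.dropUntil z hzs with hq
    have hsplit2 := SimpleGraph.Walk.take_spec q hw2
    have hlq2 : (q.takeUntil w hw2).length + (q.dropUntil w hw2).length = q.length := by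
      rw [← SimpleGraph.Walk.length_append, hsplit2]
    have h1 := T.dist_le (q.takeUntil w hw2)
    have h2 := T.dist_le (q.dropUntil w hw2)
    omega

lemma card_le_of_geodesic (hT : T.IsTree) {a b : V} {k : ℕ} (hab : T.dist a b ≤ k)
    (s : Finset V) (hs : ∀ z ∈ s, T.dist a z + T.dist z b = T.dist a b) :
    s.card ≤ k + 1 := by
  classical
  obtain ⟨p, hp, hlen⟩ := hT.isConnected.exists_path_of_dist a b
  have hsub : s ⊆ p.support.toFinset := fun z hz =>
    List.mem_toFinset.mpr (mem_geodesic_support hT p hp hlen (hs z hz))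
  calc s.card ≤ p.support.toFinset.card := Finset.card_le_card hsub
    _ ≤ p.support.length := by
        rw [List.card_toFinset]
        exact (List.dedup_sublist _).length_le
    _ = p.length + 1 := SimpleGraph.Walk.length_support p
    _ ≤ k + 1 := by omega

end AuxTreeLayout

/-- a tree-layout of bandwidth at most `k` yields a proper chordal completion
with clique number at most `k + 1`. -/
theorem properChordal_completion_of_layout {V : Type*} (G : SimpleGraph V) (k : ℕ)
    (h : ∃ L : TreeLayout G, L.BandwidthLE k) :
    ∃ H : SimpleGraph V, G ≤ H ∧ ProperChordal H ∧
      ∀ s : Finset V, H.IsClique (s : Set V) → s.card ≤ k + 1 := by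
    classical
  obtain ⟨L, hL⟩ := h
  set T := L.tree with hTdef
  set r := L.root with hrdef
  have htree : T.IsTree := L.isTree
  have hc : T.Connected := htree.isConnected
  let H : SimpleGraph V :=
    { Adj := fun x y => x ≠ y ∧ (AncIn T r x y ∨ AncIn T r y x) ∧ T.dist x y ≤ k
      symm := by
        constructor
        intro x y hxy
        refine ⟨hxy.1.symm, hxy.2.1.symm, ?_⟩
        rw [SimpleGraph.dist_comm]
        exact hxy.2.2
      loopless := ⟨fun x hx => hx.1 rfl⟩ }
  have cliqueBound : ∀ s : Finset V, H.IsClique (s : Set V) → s.card ≤ k + 1 := by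
    intro s hs
    rcases s.eq_empty_or_nonempty with rfl | hne
    · simp
    obtain ⟨a, ha, hamin⟩ := Finset.exists_min_image s (fun z => T.dist r z) hne
    obtain ⟨b, hb, hbmax⟩ := Finset.exists_max_image s (fun z => T.dist r z) hne
    have hAa : ∀ z ∈ s, AncIn T r a z := by
      intro z hz
      by_cases hza : z = a
      · subst hza; exact ancIn_refl T r z
      · have hadj : H.Adj a z :=
          hs (Finset.mem_coe.mpr ha) (Finset.mem_coe.mpr hz) (fun hh => hza hh.symm)
        rcases hadj.2.1 with h1 | h1
        · exact h1
        · have hmin := hamin z hz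
          unfold AncIn at h1
          have h0 : T.dist z a = 0 := by omega
          exact absurd (hc.dist_eq_zero_iff.mp h0) hza
    have hAb : ∀ z ∈ s, AncIn T r z b := by
      intro z hz
      by_cases hzb : z = b
      · subst hzb; exact ancIn_refl T r z
      · have hadj : H.Adj z b := hs (Finset.mem_coe.mpr hz) (Finset.mem_coe.mpr hb) hzb
        rcases hadj.2.1 with h1 | h1
        · exact h1
        · have hmax := hbmax z hz
          unfold AncIn at h1
          have h0 : T.dist b z = 0 := by omega
          exact absurd (hc.dist_eq_zero_iff.mp h0).symm hzb
    by_cases hab : a = b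
    · have hsub : s ⊆ {a} := by
        intro z hz
        have h1 := hAa z hz
        have h2 := hAb z hz
        rw [← hab] at h2
        simp [(ancIn_antisymm hc h1 h2).symm]
      have := Finset.card_le_card hsub
      simp only [Finset.card_singleton] at this
      omega
    · have hadj : H.Adj a b := hs (Finset.mem_coe.mpr ha) (Finset.mem_coe.mpr hb) hab
      exact card_le_of_geodesic htree hadj.2.2 s
        (fun z hz => ancIn_geodesic hc (hAa z hz) (hAb z hz))
  refine ⟨H, ?_, ?_, cliqueBound⟩
  · intro x y hxy
    exact ⟨hxy.ne, L.layout hxy, hL hxy⟩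
  · refine ⟨⟨T, htree, r, fun x y hxy => hxy.2.1⟩, ?_⟩
    intro K hK
    have hKne : K.Nonempty := by
      by_contra hemp
      rw [Set.not_nonempty_iff_eq_empty] at hemp
      have h1 : H.IsClique {r} := Set.pairwise_singleton r H.Adj
      have h2 := hK.2 {r} h1 (hemp ▸ Set.empty_subset _)
      rw [hemp] at h2
      exact (Set.singleton_ne_empty r) h2
    have hKfin : K.Finite := by
      rw [← Set.not_infinite]
      intro hinf
      obtain ⟨t, hts, htcard⟩ := hinf.exists_subset_card_eq (k + 2)
      have := cliqueBound t (hK.1.subset hts)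
      omega
    have hsne : hKfin.toFinset.Nonempty := by rwa [Set.Finite.toFinset_nonempty]
    obtain ⟨a, ha, hamin⟩ :=
      Finset.exists_min_image hKfin.toFinset (fun z => T.dist r z) hsne
    obtain ⟨b, hb, hbmax⟩ :=
      Finset.exists_max_image hKfin.toFinset (fun z => T.dist r z) hsne
    rw [Set.Finite.mem_toFinset] at ha hb
    have hAa : ∀ z ∈ K, AncIn T r a z := by
      intro z hz
      by_cases hza : z = a
      · subst hza; exact ancIn_refl T r z
      · have hadj : H.Adj a z := hK.1 ha hz (fun hh => hza hh.symm)
        rcases hadj.2.1 with h1 | h1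
        · exact h1
        · have hmin := hamin z (hKfin.mem_toFinset.mpr hz)
          unfold AncIn at h1
          have h0 : T.dist z a = 0 := by omega
          exact absurd (hc.dist_eq_zero_iff.mp h0) hza
    have hAb : ∀ z ∈ K, AncIn T r z b := by
      intro z hz
      by_cases hzb : z = b
      · subst hzb; exact ancIn_refl T r z
      · have hadj : H.Adj z b := hK.1 hz hb hzb
        rcases hadj.2.1 with h1 | h1
        · exact h1
        · have hmax := hbmax z (hKfin.mem_toFinset.mpr hz)
          unfold AncIn at h1
          have h0 : T.dist b z = 0 := by omega
          exact absurd (hc.dist_eq_zero_iff.mp h0).symm hzb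
    by_cases hab : a = b
    · refine ⟨a, a, ancIn_refl T r a, ?_⟩
      ext z
      constructor
      · intro hz
        exact ⟨hAa z hz, hab ▸ hAb z hz⟩
      · rintro ⟨h1, h2⟩
        have hza := ancIn_antisymm hc h1 h2
        rw [← hza]
        exact ha
    · have hadjab : H.Adj a b := hK.1 ha hb hab
      have hdab : T.dist a b ≤ k := hadjab.2.2
      have hclq : H.IsClique {z | AncIn T r a z ∧ AncIn T r z b} := by
        rintro z ⟨hz1, hz2⟩ w ⟨hw1, hw2⟩ hzw
        have gz := ancIn_geodesic hc hz1 hz2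
        have gw := ancIn_geodesic hc hw1 hw2
        rcases le_total (T.dist a z) (T.dist a w) with hle | hle
        · have hcomp := tree_comparable htree gz gw hle
          have hAnc : AncIn T r z w := by
            unfold AncIn at hz1 hw1 ⊢; omega
          exact ⟨hzw, Or.inl hAnc, by omega⟩
        · have hcomp := tree_comparable htree gw gz hle
          have hAnc : AncIn T r w z := by
            unfold AncIn at hz1 hw1 ⊢; omega
          have hcomm : T.dist z w = T.dist w z := SimpleGraph.dist_comm
          exact ⟨hzw, Or.inr hAnc, by omega⟩
      have hsub : K ⊆ {z | AncIn T r a z ∧ AncIn T r z b} :=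
        fun z hz => ⟨hAa z hz, hAb z hz⟩
      exact ⟨a, b, hAb a ha, (hK.2 _ hclq hsub).symm⟩
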